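/- In the ring of formal power series in z with coefficients in the polynomial ring ℚ[x], the identity (Σ_{n≥0} B̂_n(x) zⁿ/n!) · ((x−1)·C(z) − (x+1)·S(z)) = x−1 holds, where C(z) = Σ_{m≥0} (−1)^m (x−1)^{2m} z^{2m}/(2m)! and S(z) = Σ_{m≥0} (−1)^m (x−1)^{2m+1} z^{2m+1}/(2m+1)! (the formal expansions of cos(z(x−1)) and sin(z(x−1))). Equivalently, Σ_{n≥0} B̂_n(x) zⁿ/n! = (x−1)/((x−1)cos(z(x−1)) − (x+1)sin(z(x−1))). -/

import Mathlib

open Finset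

/-- Signed permutations of order `n` (the hyperoctahedral group), modeled as a
permutation of `Fin n` together with a sign for each position. -/
abbrev BSigned (n : ℕ) := Equiv.Perm (Fin n) × (Fin n → Bool)

/-- The word of a signed permutation: `bword σ j = σ(j)` for `1 ≤ j ≤ n`,
with the convention `σ(0) = 0`. -/
def bword {n : ℕ} (σ : BSigned n) (j : ℕ) : ℤ :=
  if h : 1 ≤ j ∧ j ≤ n then
    (if σ.2 ⟨j - 1, by omega⟩ then -1 else 1) * ((σ.1 ⟨j - 1, by omega⟩ : ℕ) + 1)
  else 0

/-- The number of alternating descents of a signed permutation: the number of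
`0 ≤ j ≤ n-1` such that `j` is even and `σ(j) < σ(j+1)`, or `j` is odd and `σ(j) > σ(j+1)`. -/
def altdesB {n : ℕ} (σ : BSigned n) : ℕ :=
  ((Finset.range n).filter (fun j => (Even j ∧ bword σ j < bword σ (j + 1)) ∨
      (Odd j ∧ bword σ (j + 1) < bword σ j))).card

/-- The type B alternating Eulerian number `B̂(n,k)`. -/
def Bhat (n k : ℕ) : ℕ :=
  (Finset.univ.filter (fun σ : BSigned n => altdesB σ = k)).card

/-- The type B alternating Eulerian polynomial `B̂_n(x)` as a real function. -/
noncomputable def Bpoly (n : ℕ) (x : ℝ) : ℝ :=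
  ∑ σ : BSigned n, x ^ altdesB σ

/-- The word of a permutation of `{1,…,n}`: `aword π j = π(j)` for `1 ≤ j ≤ n`,
with the convention `π(0) = 0`. -/
def aword {n : ℕ} (π : Equiv.Perm (Fin n)) (j : ℕ) : ℕ :=
  if h : 1 ≤ j ∧ j ≤ n then (π ⟨j - 1, by omega⟩ : ℕ) + 1 else 0

/-- The number of alternating descents of a permutation: the number of
`1 ≤ j ≤ n-1` such that `j` is odd and `π(j) > π(j+1)`, or `j` is even and `π(j) < π(j+1)`. -/
def altdesA {n : ℕ} (π : Equiv.Perm (Fin n)) : ℕ :=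
  ((Finset.Icc 1 (n - 1)).filter (fun j => (Odd j ∧ aword π (j + 1) < aword π j) ∨
      (Even j ∧ aword π j < aword π (j + 1)))).card

/-- The type A alternating Eulerian number `Â(n,k)`. -/
def Ahat (n k : ℕ) : ℕ :=
  (Finset.univ.filter (fun π : Equiv.Perm (Fin n) => altdesA π = k)).card

/-- The type A alternating Eulerian polynomial `Â_n(x)` as a real function. -/
noncomputable def Apoly (n : ℕ) (x : ℝ) : ℝ :=
  ∑ π : Equiv.Perm (Fin n), x ^ altdesA π

/-- The number of left peaks of a permutation: indices `1 ≤ i ≤ n-1` with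
`π(i-1) < π(i) > π(i+1)`, where `π(0) = 0`. -/
def lpk {n : ℕ} (π : Equiv.Perm (Fin n)) : ℕ :=
  ((Finset.Icc 1 (n - 1)).filter (fun i =>
      aword π (i - 1) < aword π i ∧ aword π (i + 1) < aword π i)).card

/-- `M n k` is the number of permutations of `{1,…,n}` with exactly `k` left peaks. -/
def M (n k : ℕ) : ℕ :=
  (Finset.univ.filter (fun π : Equiv.Perm (Fin n) => lpk π = k)).card

/-- The derivative polynomials for secant: `Q 0 = 1`,
`Q (n+1) = x Q n + (1+x²) (Q n)'`. -/
noncomputable def Q : ℕ → Polynomial ℝ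
  | 0 => 1
  | n + 1 => Polynomial.X * Q n + (1 + Polynomial.X ^ 2) * Polynomial.derivative (Q n)

/-- The coefficients `ξ_{n,i}` (terms with negative index vanish). -/
def xi : ℕ → ℤ → ℤ
  | 0, i => if i = 0 then 1 else 0
  | n + 1, i => (1 + 2 * (n : ℤ) - 6 * i) * xi n i + ((n : ℤ) - 2 * i + 2) * xi n (i - 1)
      - 4 * (i + 1) * xi n (i + 1)

/-- The polynomial `ξ_n(x) = Σ_{i=0}^{⌊n/2⌋} ξ_{n,i} x^i` as a real function. -/
noncomputable def xiPoly (n : ℕ) (x : ℝ) : ℝ :=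
  ∑ i ∈ Finset.range (n / 2 + 1), (xi n i : ℝ) * x ^ i

/-- A snake: a signed permutation with `σ(0) < σ(1) > σ(2) < σ(3) > ⋯`. -/
def IsSnake {n : ℕ} (σ : BSigned n) : Prop :=
  ∀ i : ℕ, (2 * i + 1 ≤ n → bword σ (2 * i) < bword σ (2 * i + 1)) ∧
    (2 * i + 2 ≤ n → bword σ (2 * i + 2) < bword σ (2 * i + 1))

/-- The Springer number `s_n`: the number of snakes of order `n`. -/
noncomputable def springer (n : ℕ) : ℕ := Nat.card {σ : BSigned n // IsSnake σ}

/-- An alternating (down-up) permutation: `π(1) > π(2) < π(3) > ⋯`. -/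
def IsAlternating {m : ℕ} (π : Equiv.Perm (Fin m)) : Prop :=
  ∀ j : ℕ, 1 ≤ j → j + 1 ≤ m →
    (Odd j → aword π (j + 1) < aword π j) ∧ (Even j → aword π j < aword π (j + 1))

/-- The secant number `E_{2n}`: the number of alternating permutations of `{1,…,2n}`. -/
noncomputable def secantNumber (n : ℕ) : ℕ :=
  Nat.card {π : Equiv.Perm (Fin (2 * n)) // IsAlternating π}

/-- The type B alternating Eulerian polynomial `B̂_n(x)` as a polynomial over `ℚ`. -/
noncomputable def BpolyQ (n : ℕ) : Polynomial ℚ :=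
  ∑ σ : BSigned n, Polynomial.X ^ altdesB σ

/-- The formal expansion of `cos(z(x-1))` as a power series in `z` over `ℚ[x]`. -/
noncomputable def cosSeries : PowerSeries (Polynomial ℚ) :=
  PowerSeries.mk fun j =>
    if Even j then
      Polynomial.C ((-1) ^ (j / 2) * ((j.factorial : ℚ)⁻¹)) * (Polynomial.X - 1) ^ j
    else 0

/-- The formal expansion of `sin(z(x-1))` as a power series in `z` over `ℚ[x]`. -/
noncomputable def sinSeries : PowerSeries (Polynomial ℚ) :=
  PowerSeries.mk fun j =>
    if ¬ Even j then
      Polynomial.C ((-1) ^ ((j - 1) / 2) * ((j.factorial : ℚ)⁻¹)) * (Polynomial.X - 1) ^ j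
    else 0

/-! ### Auxiliary development for `stmt6` -/

section Stmt6Aux

open Polynomial

/-- The alternating-descent condition at index `j`. -/
abbrev SAlt {n : ℕ} (σ : BSigned n) (j : ℕ) : Prop :=
  (Even j ∧ bword σ j < bword σ (j + 1)) ∨ (Odd j ∧ bword σ (j + 1) < bword σ j)

lemma SA_bword_in {n : ℕ} (σ : BSigned n) (l : ℕ) (h1 : 1 ≤ l) (h2 : l ≤ n) :
    bword σ l = (if σ.2 ⟨l - 1, by omega⟩ then -1 else 1) * ((σ.1 ⟨l - 1, by omega⟩ : ℕ) + 1) := by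
  unfold bword
  rw [dif_pos ⟨h1, h2⟩]

lemma SA_bword_zero {n : ℕ} (σ : BSigned n) : bword σ 0 = 0 := by
  unfold bword
  rw [dif_neg (by omega)]

lemma SA_bword_lt {n : ℕ} (σ : BSigned n) (l : ℕ) :
    bword σ l < (n : ℤ) + 1 ∧ -((n : ℤ) + 1) < bword σ l := by
  unfold bword
  split
  · next h =>
    have hk : ((σ.1 ⟨l - 1, by omega⟩ : Fin n) : ℕ) < n := Fin.is_lt _
    split <;> push_cast <;> omega
  · constructor <;> push_cast <;> omega

lemma SA_bword_ne {n : ℕ} (σ : BSigned n) {l l' : ℕ} (h1 : 1 ≤ l) (h2 : l ≤ n)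
    (h3 : 1 ≤ l') (h4 : l' ≤ n) (hne : l ≠ l') : bword σ l ≠ bword σ l' := by
  rw [SA_bword_in σ l h1 h2, SA_bword_in σ l' h3 h4]
  have hinj : σ.1 ⟨l - 1, by omega⟩ ≠ σ.1 ⟨l' - 1, by omega⟩ := by
    intro hc
    have := σ.1.injective hc
    rw [Fin.mk.injEq] at this
    omega
  have hv : ((σ.1 ⟨l - 1, by omega⟩ : Fin n) : ℕ) ≠ ((σ.1 ⟨l' - 1, by omega⟩ : Fin n) : ℕ) := by
    intro hc
    exact hinj (Fin.ext hc)
  split <;> split <;> intro hc <;> push_cast at hc <;> omega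

/-- Flip the signs of all positions `≥ i0` (0-indexed). -/
def SFlip {n : ℕ} (i0 : ℕ) (σ : BSigned n) : BSigned n :=
  (σ.1, fun p => if i0 ≤ (p : ℕ) then ! σ.2 p else σ.2 p)

lemma SFlip_invol {n : ℕ} (i0 : ℕ) : Function.Involutive (SFlip (n := n) i0) := by
  intro σ
  unfold SFlip
  refine Prod.ext rfl ?_
  funext p
  by_cases h : i0 ≤ (p : ℕ) <;> simp [h]

lemma SA_bword_SFlip_le {n i0 : ℕ} (σ : BSigned n) {l : ℕ} (h : l ≤ i0) :
    bword (SFlip i0 σ) l = bword σ l := by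
  unfold bword SFlip
  split
  · next hr =>
    have hni : ¬ i0 ≤ ((⟨l - 1, by omega⟩ : Fin n) : ℕ) := by simp; omega
    simp only [hni, if_false]
  · rfl

lemma SA_bword_SFlip_gt {n i0 : ℕ} (σ : BSigned n) {l : ℕ} (h : i0 < l) :
    bword (SFlip i0 σ) l = - bword σ l := by
  unfold bword SFlip
  split
  · next hr =>
    have hi : i0 ≤ ((⟨l - 1, by omega⟩ : Fin n) : ℕ) := by simp; omega
    simp only [hi, if_true]
    cases hb : σ.2 ⟨l - 1, by omega⟩ <;> simp <;> ring
  · simp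

lemma SAlt_SFlip_lt {n i0 : ℕ} (σ : BSigned n) {j : ℕ} (h : j + 1 ≤ i0) :
    SAlt (SFlip i0 σ) j ↔ SAlt σ j := by
  unfold SAlt
  rw [SA_bword_SFlip_le σ (show j ≤ i0 by omega), SA_bword_SFlip_le σ h]

lemma SAlt_SFlip_gt {n i0 : ℕ} (σ : BSigned n) {j : ℕ} (hj0 : i0 < j) (hjn : j + 1 ≤ n) :
    SAlt (SFlip i0 σ) j ↔ ¬ SAlt σ j := by
  have h1 : bword (SFlip i0 σ) j = - bword σ j := SA_bword_SFlip_gt σ hj0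
  have h2 : bword (SFlip i0 σ) (j + 1) = - bword σ (j + 1) := SA_bword_SFlip_gt σ (by omega)
  have hne : bword σ j ≠ bword σ (j + 1) :=
    SA_bword_ne σ (by omega) (by omega) (by omega) hjn (by omega)
  unfold SAlt
  rw [h1, h2]
  rcases Nat.even_or_odd j with he | ho
  · have hno : ¬ Odd j := by simp [Nat.not_odd_iff_even.mpr he]
    simp only [he, true_and, hno, false_and, or_false]
    omega
  · have hne' : ¬ Even j := by simp [Nat.not_even_iff_odd.mpr ho]
    simp only [ho, true_and, hne', false_and, false_or]
    omega


lemma SA_sum_flip {n : ℕ} {i0 : ℕ} (hi : i0 < n) :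
    (∑ σ : BSigned n, (Polynomial.X : Polynomial ℚ) ^
        (((Finset.range n).filter
          (fun j => (j < i0 ∧ SAlt σ j) ∨ (i0 < j ∧ ¬ SAlt σ j))).card))
    = ∑ σ : BSigned n, (Polynomial.X : Polynomial ℚ) ^
        (((Finset.range n).filter (fun j => j ≠ i0 ∧ SAlt σ j)).card) := by
  refine Fintype.sum_bijective (SFlip i0) ((SFlip_invol i0).bijective) _ _ (fun σ => ?_)
  congr 1
  have hcong : ∀ j ∈ Finset.range n,
      ((j < i0 ∧ SAlt σ j) ∨ (i0 < j ∧ ¬ SAlt σ j)) ↔ (j ≠ i0 ∧ SAlt (SFlip i0 σ) j) := by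
    intro j hj
    simp only [Finset.mem_range] at hj
    rcases lt_trichotomy j i0 with h | rfl | h
    · rw [SAlt_SFlip_lt σ (by omega)]
      constructor
      · rintro (⟨_, hA⟩ | ⟨hh, _⟩)
        · exact ⟨by omega, hA⟩
        · omega
      · rintro ⟨_, hA⟩
        exact Or.inl ⟨h, hA⟩
    · constructor
      · rintro (⟨hh, _⟩ | ⟨hh, _⟩) <;> omega
      · rintro ⟨hh, _⟩
        exact absurd rfl hh
    · rw [SAlt_SFlip_gt σ h (by omega)]
      constructor
      · rintro (⟨hh, _⟩ | ⟨_, hA⟩)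
        · omega
        · exact ⟨by omega, hA⟩
      · rintro ⟨_, hA⟩
        exact Or.inr ⟨h, hA⟩
  rw [Finset.filter_congr hcong]

/-- Insert the letter `±(n+1)` (sign `ε`, `true` = negative) at position `i` (0-indexed). -/
def SIns {n : ℕ} (σ : BSigned n) (i : Fin (n + 1)) (ε : Bool) : BSigned (n + 1) :=
  ((finSuccEquiv' i).trans ((Equiv.optionCongr σ.1).trans (finSuccEquiv' (Fin.last n)).symm),
    fun p => (finSuccEquiv' i p).elim ε σ.2)

lemma SIns_apply_self {n : ℕ} (σ : BSigned n) (i : Fin (n + 1)) (ε : Bool) :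
    (SIns σ i ε).1 i = Fin.last n := by
  simp [SIns, finSuccEquiv'_at]

lemma SIns_sign_self {n : ℕ} (σ : BSigned n) (i : Fin (n + 1)) (ε : Bool) :
    (SIns σ i ε).2 i = ε := by
  simp [SIns, finSuccEquiv'_at]

lemma SIns_apply_succAbove {n : ℕ} (σ : BSigned n) (i : Fin (n + 1)) (ε : Bool) (q : Fin n) :
    (SIns σ i ε).1 (i.succAbove q) = Fin.castSucc (σ.1 q) := by
  simp [SIns, finSuccEquiv'_succAbove, Fin.succAbove_last]

lemma SIns_sign_succAbove {n : ℕ} (σ : BSigned n) (i : Fin (n + 1)) (ε : Bool) (q : Fin n) :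
    (SIns σ i ε).2 (i.succAbove q) = σ.2 q := by
  simp [SIns, finSuccEquiv'_succAbove]

lemma SA_bword_SIns_le {n : ℕ} (σ : BSigned n) (i : Fin (n + 1)) (ε : Bool) {l : ℕ}
    (h1 : 1 ≤ l) (h2 : l ≤ (i : ℕ)) : bword (SIns σ i ε) l = bword σ l := by
  have hn : (i : ℕ) ≤ n := by omega
  rw [SA_bword_in _ l h1 (by omega), SA_bword_in σ l h1 (by omega)]
  set q : Fin n := ⟨l - 1, by omega⟩ with hq
  have hp : (⟨l - 1, by omega⟩ : Fin (n + 1)) = i.succAbove q := by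
    rw [Fin.succAbove_of_castSucc_lt]
    · ext; simp [hq]
    · rw [Fin.lt_def]; simp only [Fin.coe_castSucc, hq]; omega
  rw [hp, SIns_apply_succAbove, SIns_sign_succAbove]
  simp

lemma SA_bword_SIns_self {n : ℕ} (σ : BSigned n) (i : Fin (n + 1)) (ε : Bool) :
    bword (SIns σ i ε) ((i : ℕ) + 1) = (if ε then (-1 : ℤ) else 1) * ((n : ℤ) + 1) := by
  rw [SA_bword_in _ _ (by omega) (by omega)]
  have hp : (⟨(i : ℕ) + 1 - 1, by omega⟩ : Fin (n + 1)) = i := by ext; simp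
  rw [hp, SIns_apply_self, SIns_sign_self]
  simp [Fin.val_last]

lemma SA_bword_SIns_ge {n : ℕ} (σ : BSigned n) (i : Fin (n + 1)) (ε : Bool) {l : ℕ}
    (h1 : (i : ℕ) + 2 ≤ l) (h2 : l ≤ n + 1) : bword (SIns σ i ε) l = bword σ (l - 1) := by
  rw [SA_bword_in _ l (by omega) h2, SA_bword_in σ (l - 1) (by omega) (by omega)]
  set q : Fin n := ⟨l - 2, by omega⟩ with hq
  have hp : (⟨l - 1, by omega⟩ : Fin (n + 1)) = i.succAbove q := by
    rw [Fin.succAbove_of_le_castSucc]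
    · ext; simp [hq]; omega
    · rw [Fin.le_def]; simp only [Fin.coe_castSucc, hq]; omega
  have hp2 : (⟨l - 1 - 1, by omega⟩ : Fin n) = q := by ext; simp [hq]; omega
  rw [hp, hp2, SIns_apply_succAbove, SIns_sign_succAbove]
  simp
lemma SAlt_SIns_lt {n : ℕ} (σ : BSigned n) (i : Fin (n + 1)) (ε : Bool) {j : ℕ}
    (h : j < (i : ℕ)) : SAlt (SIns σ i ε) j ↔ SAlt σ j := by
  have h1 : bword (SIns σ i ε) j = bword σ j := by
    rcases Nat.eq_zero_or_pos j with rfl | hj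
    · rw [SA_bword_zero, SA_bword_zero]
    · exact SA_bword_SIns_le σ i ε hj (by omega)
  have h2 : bword (SIns σ i ε) (j + 1) = bword σ (j + 1) :=
    SA_bword_SIns_le σ i ε (by omega) (by omega)
  unfold SAlt
  rw [h1, h2]

lemma SAlt_SIns_at {n : ℕ} (σ : BSigned n) (i : Fin (n + 1)) (ε : Bool) :
    SAlt (SIns σ i ε) (i : ℕ) ↔ (Even (i : ℕ) ↔ ε = false) := by
  have h1 : bword (SIns σ i ε) (i : ℕ) = bword σ (i : ℕ) := by
    rcases Nat.eq_zero_or_pos (i : ℕ) with h0 | hp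
    · rw [h0, SA_bword_zero, SA_bword_zero]
    · exact SA_bword_SIns_le σ i ε hp le_rfl
  have h2 := SA_bword_SIns_self σ i ε
  obtain ⟨hb1, hb2⟩ := SA_bword_lt σ (i : ℕ)
  unfold SAlt
  rw [h1, h2]
  cases ε <;> simp [Nat.even_iff, Nat.odd_iff] <;> omega

lemma SAlt_SIns_at1 {n : ℕ} (σ : BSigned n) (i : Fin (n + 1)) (ε : Bool) (hlt : (i : ℕ) < n) :
    SAlt (SIns σ i ε) ((i : ℕ) + 1) ↔ (Even (i : ℕ) ↔ ε = false) := by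
  have h2 := SA_bword_SIns_self σ i ε
  have h3 : bword (SIns σ i ε) ((i : ℕ) + 1 + 1) = bword σ ((i : ℕ) + 1) := by
    rw [SA_bword_SIns_ge σ i ε (by omega) (by omega)]
    norm_num
  obtain ⟨hb1, hb2⟩ := SA_bword_lt σ ((i : ℕ) + 1)
  unfold SAlt
  rw [h2, h3]
  cases ε <;> simp [Nat.even_iff, Nat.odd_iff, Nat.add_mod] <;> omega

lemma SAlt_SIns_gt {n : ℕ} (σ : BSigned n) (i : Fin (n + 1)) (ε : Bool) {m : ℕ}
    (hm : (i : ℕ) + 1 ≤ m) (hmn : m + 1 ≤ n) : SAlt (SIns σ i ε) (m + 1) ↔ ¬ SAlt σ m := by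
  have h1 : bword (SIns σ i ε) (m + 1) = bword σ m := by
    rw [SA_bword_SIns_ge σ i ε (by omega) (by omega)]
    norm_num
  have h2 : bword (SIns σ i ε) (m + 1 + 1) = bword σ (m + 1) := by
    rw [SA_bword_SIns_ge σ i ε (by omega) (by omega)]
    norm_num
  have hne : bword σ m ≠ bword σ (m + 1) :=
    SA_bword_ne σ (by omega) (by omega) (by omega) (by omega) (by omega)
  unfold SAlt
  rw [h1, h2]
  simp [Nat.even_iff, Nat.odd_iff, Nat.add_mod]
  omega
lemma SA_altdesB_eq {m : ℕ} (τ : BSigned m) :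
    altdesB τ = ((Finset.range m).filter (fun j => SAlt τ j)).card := rfl

/-- Prefix/complemented-suffix count. -/
def SG {n : ℕ} (σ : BSigned n) (i0 : ℕ) : ℕ :=
  ((Finset.range n).filter (fun j => (j < i0 ∧ SAlt σ j) ∨ (i0 < j ∧ ¬ SAlt σ j))).card

/-- All-but-one alternating descent count. -/
def SAc {n : ℕ} (σ : BSigned n) (i0 : ℕ) : ℕ :=
  ((Finset.range n).filter (fun j => j ≠ i0 ∧ SAlt σ j)).card

lemma SA_sum_flip' {n : ℕ} {i0 : ℕ} (hi : i0 < n) :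
    (∑ σ : BSigned n, (Polynomial.X : Polynomial ℚ) ^ SG σ i0)
      = ∑ σ : BSigned n, (Polynomial.X : Polynomial ℚ) ^ SAc σ i0 :=
  SA_sum_flip hi

lemma SA_card_SIns {n : ℕ} (σ : BSigned n) (i : Fin (n + 1)) (ε : Bool) :
    altdesB (SIns σ i ε) =
      SG σ (i : ℕ)
      + (if Even (i : ℕ) ↔ ε = false then 1 else 0) * (if (i : ℕ) < n then 2 else 1) := by
  have hi0 : (i : ℕ) ≤ n := by omega
  rw [SA_altdesB_eq]
  unfold SG
  rw [Finset.card_filter, Finset.card_filter]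
  rcases lt_or_eq_of_le hi0 with hlt | heq
  · have e1 : ∑ j ∈ Finset.range (n + 1), (if SAlt (SIns σ i ε) j then (1 : ℕ) else 0)
        = (∑ j ∈ Finset.Ico 0 (i : ℕ), (if SAlt (SIns σ i ε) j then 1 else 0))
          + ((if SAlt (SIns σ i ε) (i : ℕ) then 1 else 0)
          + ((if SAlt (SIns σ i ε) ((i : ℕ) + 1) then 1 else 0)
          + ∑ j ∈ Finset.Ico ((i : ℕ) + 1 + 1) (n + 1),
              (if SAlt (SIns σ i ε) j then 1 else 0))) := by
      rw [Finset.range_eq_Ico,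
        ← Finset.sum_Ico_consecutive _ (Nat.zero_le (i : ℕ)) (by omega : (i : ℕ) ≤ n + 1),
        Finset.sum_eq_sum_Ico_succ_bot (by omega : (i : ℕ) < n + 1),
        Finset.sum_eq_sum_Ico_succ_bot (by omega : (i : ℕ) + 1 < n + 1)]
    have p1 : ∑ j ∈ Finset.Ico 0 (i : ℕ), (if SAlt (SIns σ i ε) j then (1 : ℕ) else 0)
        = ∑ j ∈ Finset.Ico 0 (i : ℕ), (if SAlt σ j then 1 else 0) := by
      refine Finset.sum_congr rfl fun j hj => ?_
      simp only [Finset.mem_Ico] at hj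
      exact if_congr (SAlt_SIns_lt σ i ε hj.2) rfl rfl
    have p2 : (if SAlt (SIns σ i ε) (i : ℕ) then (1 : ℕ) else 0)
        = (if Even (i : ℕ) ↔ ε = false then 1 else 0) :=
      if_congr (SAlt_SIns_at σ i ε) rfl rfl
    have p3 : (if SAlt (SIns σ i ε) ((i : ℕ) + 1) then (1 : ℕ) else 0)
        = (if Even (i : ℕ) ↔ ε = false then 1 else 0) :=
      if_congr (SAlt_SIns_at1 σ i ε hlt) rfl rfl
    have p4 : ∑ j ∈ Finset.Ico ((i : ℕ) + 1 + 1) (n + 1), (if SAlt (SIns σ i ε) j then (1 : ℕ) else 0)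
        = ∑ j ∈ Finset.Ico ((i : ℕ) + 1) n, (if ¬ SAlt σ j then 1 else 0) := by
      rw [Finset.sum_Ico_eq_sum_range, Finset.sum_Ico_eq_sum_range]
      have hlen : n + 1 - ((i : ℕ) + 1 + 1) = n - ((i : ℕ) + 1) := by omega
      rw [hlen]
      refine Finset.sum_congr rfl fun k hk => ?_
      simp only [Finset.mem_range] at hk
      have hidx : (i : ℕ) + 1 + 1 + k = ((i : ℕ) + 1 + k) + 1 := by omega
      rw [hidx, if_congr (SAlt_SIns_gt σ i ε (by omega) (by omega)) rfl rfl]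
    have e2 : ∑ j ∈ Finset.range n,
          (if ((j < (i : ℕ) ∧ SAlt σ j) ∨ ((i : ℕ) < j ∧ ¬ SAlt σ j)) then (1 : ℕ) else 0)
        = (∑ j ∈ Finset.Ico 0 (i : ℕ), (if SAlt σ j then 1 else 0))
          + ((if (((i : ℕ) < (i : ℕ) ∧ SAlt σ (i : ℕ)) ∨ (((i : ℕ) < (i : ℕ)) ∧ ¬ SAlt σ (i : ℕ))) then (1 : ℕ) else 0)
          + ∑ j ∈ Finset.Ico ((i : ℕ) + 1) n, (if ¬ SAlt σ j then 1 else 0)) := by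
      rw [Finset.range_eq_Ico,
        ← Finset.sum_Ico_consecutive _ (Nat.zero_le (i : ℕ)) (by omega : (i : ℕ) ≤ n),
        Finset.sum_eq_sum_Ico_succ_bot (by omega : (i : ℕ) < n)]
      congr 1
      · refine Finset.sum_congr rfl fun j hj => ?_
        simp only [Finset.mem_Ico] at hj
        refine if_congr ⟨?_, ?_⟩ rfl rfl
        · rintro (⟨_, hA⟩ | ⟨hh, _⟩)
          · exact hA
          · exact absurd hh (by omega)
        · intro hA
          exact Or.inl ⟨hj.2, hA⟩
      · congr 1
        refine Finset.sum_congr rfl fun j hj => ?_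
        simp only [Finset.mem_Ico] at hj
        refine if_congr ⟨?_, ?_⟩ rfl rfl
        · rintro (⟨hh, _⟩ | ⟨_, hA⟩)
          · exact absurd hh (by omega)
          · exact hA
        · intro hA
          exact Or.inr ⟨by omega, hA⟩
    rw [e1, p1, p2, p3, p4, e2, if_pos hlt]
    simp only [lt_self_iff_false, false_and, or_self, if_false]
    omega
  · rw [heq]
    have e1 : ∑ j ∈ Finset.range (n + 1), (if SAlt (SIns σ i ε) j then (1 : ℕ) else 0)
        = (∑ j ∈ Finset.range n, (if SAlt (SIns σ i ε) j then 1 else 0))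
          + (if SAlt (SIns σ i ε) n then 1 else 0) := Finset.sum_range_succ _ _
    have p1 : ∑ j ∈ Finset.range n, (if SAlt (SIns σ i ε) j then (1 : ℕ) else 0)
        = ∑ j ∈ Finset.range n, (if SAlt σ j then 1 else 0) := by
      refine Finset.sum_congr rfl fun j hj => ?_
      simp only [Finset.mem_range] at hj
      exact if_congr (SAlt_SIns_lt σ i ε (by omega)) rfl rfl
    have p2 : (if SAlt (SIns σ i ε) n then (1 : ℕ) else 0)
        = (if Even n ↔ ε = false then 1 else 0) := by
      have h : (if SAlt (SIns σ i ε) ((i : ℕ)) then (1 : ℕ) else 0)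
          = (if Even (i : ℕ) ↔ ε = false then 1 else 0) :=
        if_congr (SAlt_SIns_at σ i ε) rfl rfl
      rwa [heq] at h
    have e2 : ∑ j ∈ Finset.range n,
          (if ((j < n ∧ SAlt σ j) ∨ (n < j ∧ ¬ SAlt σ j)) then (1 : ℕ) else 0)
        = ∑ j ∈ Finset.range n, (if SAlt σ j then 1 else 0) := by
      refine Finset.sum_congr rfl fun j hj => ?_
      simp only [Finset.mem_range] at hj
      refine if_congr ⟨?_, ?_⟩ rfl rfl
      · rintro (⟨_, hA⟩ | ⟨hh, _⟩)
        · exact hA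
        · exact absurd hh (by omega)
      · intro hA
        exact Or.inl ⟨by omega, hA⟩
    rw [e1, p1, p2, e2, if_neg (lt_irrefl n)]
    omega
lemma SIns_bijective (n : ℕ) :
    Function.Bijective (fun t : BSigned n × Fin (n + 1) × Bool => SIns t.1 t.2.1 t.2.2) := by
  rw [Fintype.bijective_iff_injective_and_card]
  constructor
  · rintro ⟨σ, i, ε⟩ ⟨σ', i', ε'⟩ h
    simp only at h
    have hperm : (SIns σ i ε).1 = (SIns σ' i' ε').1 := by rw [h]
    have hsign : (SIns σ i ε).2 = (SIns σ' i' ε').2 := by rw [h]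
    have hi : i = i' := by
      have h1 : (SIns σ i ε).1 i = Fin.last n := SIns_apply_self σ i ε
      have h2 : (SIns σ' i' ε').1 i' = Fin.last n := SIns_apply_self σ' i' ε'
      rw [hperm] at h1
      exact (SIns σ' i' ε').1.injective (h1.trans h2.symm)
    subst hi
    have hε : ε = ε' := by
      have h3 := congrFun hsign i
      rwa [SIns_sign_self, SIns_sign_self] at h3
    have hσ : σ = σ' := by
      refine Prod.ext ?_ ?_
      · refine Equiv.ext fun q => ?_
        have h3 : Fin.castSucc (σ.1 q) = Fin.castSucc (σ'.1 q) := by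
          rw [← SIns_apply_succAbove σ i ε q, ← SIns_apply_succAbove σ' i ε' q, hperm]
        exact Fin.castSucc_injective n h3
      · funext q
        rw [← SIns_sign_succAbove σ i ε q, ← SIns_sign_succAbove σ' i ε' q, hsign]
    rw [hσ, hε]
  · simp only [Fintype.card_prod, Fintype.card_perm, Fintype.card_fun, Fintype.card_fin,
      Fintype.card_bool, Nat.factorial_succ]
    ring

lemma SA_sum_bool (g mult i0 : ℕ) :
    ∑ ε : Bool, (Polynomial.X : Polynomial ℚ) ^ (g + (if Even i0 ↔ ε = false then 1 else 0) * mult)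
      = Polynomial.X ^ g + Polynomial.X ^ (g + mult) := by
  rw [Fintype.sum_bool]
  by_cases hpar : Even i0 <;> simp [hpar] <;> ring

lemma SA_gcard_last {n : ℕ} (σ : BSigned n) : SG σ n = altdesB σ := by
  rw [SA_altdesB_eq]
  unfold SG
  congr 1
  refine Finset.filter_congr fun j hj => ?_
  simp only [Finset.mem_range] at hj
  constructor
  · rintro (⟨_, hA⟩ | ⟨hh, _⟩)
    · exact hA
    · exact absurd hh (by omega)
  · intro hA
    exact Or.inl ⟨hj, hA⟩

lemma SA_step1 (n : ℕ) :
    BpolyQ (n + 1) = (1 + Polynomial.X) * BpolyQ n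
      + (1 + Polynomial.X ^ 2) * ∑ σ : BSigned n, ∑ i0 ∈ Finset.range n,
          (Polynomial.X : Polynomial ℚ) ^ SAc σ i0 := by
  have hbij := Fintype.sum_bijective
    (fun t : BSigned n × Fin (n + 1) × Bool => SIns t.1 t.2.1 t.2.2)
    (SIns_bijective n)
    (fun t => (Polynomial.X : Polynomial ℚ) ^ altdesB (SIns t.1 t.2.1 t.2.2))
    (fun τ => (Polynomial.X : Polynomial ℚ) ^ altdesB τ) (fun t => rfl)
  rw [BpolyQ, ← hbij, Fintype.sum_prod_type]
  have hinner : ∀ σ : BSigned n,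
      (∑ t : Fin (n + 1) × Bool, Polynomial.X ^ altdesB (SIns σ t.1 t.2))
        = (∑ k : Fin n, ((Polynomial.X : Polynomial ℚ) ^ SG σ (k : ℕ)
            + Polynomial.X ^ (SG σ (k : ℕ) + 2)))
          + (Polynomial.X ^ altdesB σ + Polynomial.X ^ (altdesB σ + 1)) := by
    intro σ
    rw [Fintype.sum_prod_type, Fin.sum_univ_castSucc]
    congr 1
    · refine Finset.sum_congr rfl fun k _ => ?_
      have hc : ((Fin.castSucc k : Fin (n + 1)) : ℕ) = (k : ℕ) := rfl
      have hcard : ∀ ε : Bool, altdesB (SIns σ (Fin.castSucc k) ε)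
          = SG σ (k : ℕ) + (if Even (k : ℕ) ↔ ε = false then 1 else 0) * 2 := by
        intro ε
        rw [SA_card_SIns σ (Fin.castSucc k) ε, hc, if_pos k.is_lt]
      calc (∑ ε : Bool, Polynomial.X ^ altdesB (SIns σ (Fin.castSucc k) ε))
          = ∑ ε : Bool, (Polynomial.X : Polynomial ℚ)
              ^ (SG σ (k : ℕ) + (if Even (k : ℕ) ↔ ε = false then 1 else 0) * 2) := by
            refine Finset.sum_congr rfl fun ε _ => by rw [hcard ε]
        _ = _ := SA_sum_bool _ 2 (k : ℕ)
    · have hc : ((Fin.last n : Fin (n + 1)) : ℕ) = n := rfl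
      have hcard : ∀ ε : Bool, altdesB (SIns σ (Fin.last n) ε)
          = altdesB σ + (if Even n ↔ ε = false then 1 else 0) * 1 := by
        intro ε
        rw [SA_card_SIns σ (Fin.last n) ε, hc, if_neg (lt_irrefl n), SA_gcard_last]
      calc (∑ ε : Bool, Polynomial.X ^ altdesB (SIns σ (Fin.last n) ε))
          = ∑ ε : Bool, (Polynomial.X : Polynomial ℚ)
              ^ (altdesB σ + (if Even n ↔ ε = false then 1 else 0) * 1) := by
            refine Finset.sum_congr rfl fun ε _ => by rw [hcard ε]
        _ = _ := SA_sum_bool _ 1 n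
  rw [Finset.sum_congr rfl fun σ _ => hinner σ, Finset.sum_add_distrib]
  have hB : (∑ σ : BSigned n, (Polynomial.X ^ altdesB σ + Polynomial.X ^ (altdesB σ + 1)))
      = (1 + Polynomial.X) * BpolyQ n := by
    calc ∑ σ : BSigned n, (Polynomial.X ^ altdesB σ + Polynomial.X ^ (altdesB σ + 1))
        = ∑ σ : BSigned n, (Polynomial.X : Polynomial ℚ) ^ altdesB σ * (1 + Polynomial.X) := by
          refine Finset.sum_congr rfl fun σ _ => ?_
          rw [pow_succ]; ring
      _ = (1 + Polynomial.X) * BpolyQ n := by rw [← Finset.sum_mul, BpolyQ, mul_comm]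
  have hG : (∑ σ : BSigned n, ∑ k : Fin n,
        ((Polynomial.X : Polynomial ℚ) ^ SG σ (k : ℕ) + Polynomial.X ^ (SG σ (k : ℕ) + 2)))
      = (1 + Polynomial.X ^ 2) * ∑ σ : BSigned n, ∑ i0 ∈ Finset.range n,
          (Polynomial.X : Polynomial ℚ) ^ SAc σ i0 := by
    calc ∑ σ : BSigned n, ∑ k : Fin n,
          ((Polynomial.X : Polynomial ℚ) ^ SG σ (k : ℕ) + Polynomial.X ^ (SG σ (k : ℕ) + 2))
        = ∑ σ : BSigned n, ∑ k : Fin n,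
            (Polynomial.X : Polynomial ℚ) ^ SG σ (k : ℕ) * (1 + Polynomial.X ^ 2) := by
          refine Finset.sum_congr rfl fun σ _ => Finset.sum_congr rfl fun k _ => ?_
          rw [pow_add]; ring
      _ = ∑ k : Fin n, (∑ σ : BSigned n, (Polynomial.X : Polynomial ℚ) ^ SG σ (k : ℕ))
            * (1 + Polynomial.X ^ 2) := by
          rw [Finset.sum_comm]
          exact Finset.sum_congr rfl fun k _ => (Finset.sum_mul _ _ _).symm
      _ = ∑ k : Fin n, (∑ σ : BSigned n, (Polynomial.X : Polynomial ℚ) ^ SAc σ (k : ℕ))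
            * (1 + Polynomial.X ^ 2) := by
          refine Finset.sum_congr rfl fun k _ => ?_
          rw [SA_sum_flip' k.is_lt]
      _ = (1 + Polynomial.X ^ 2) * ∑ σ : BSigned n, ∑ i0 ∈ Finset.range n,
            (Polynomial.X : Polynomial ℚ) ^ SAc σ i0 := by
          rw [← Finset.sum_mul, mul_comm]
          congr 1
          rw [Finset.sum_comm]
          exact Finset.sum_congr rfl fun σ _ =>
            Fin.sum_univ_eq_sum_range (fun k => (Polynomial.X : Polynomial ℚ) ^ SAc σ k) n
  rw [hB, hG]
  ring

lemma SA_erase {n : ℕ} (σ : BSigned n) (i0 : ℕ) :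
    (Finset.range n).filter (fun j => j ≠ i0 ∧ SAlt σ j)
      = ((Finset.range n).filter (fun j => SAlt σ j)).erase i0 := by
  ext j
  simp only [Finset.mem_filter, Finset.mem_erase, Finset.mem_range]
  tauto

lemma SA_sum_acard (n : ℕ) (σ : BSigned n) :
    (∑ i0 ∈ Finset.range n, (Polynomial.X : Polynomial ℚ) ^ SAc σ i0)
      = (n : Polynomial ℚ) * Polynomial.X ^ altdesB σ
        - (Polynomial.X - 1) * Polynomial.derivative (Polynomial.X ^ altdesB σ : Polynomial ℚ) := by
  classical
  set F := (Finset.range n).filter (fun j => SAlt σ j) with hF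
  have ha : altdesB σ = F.card := SA_altdesB_eq σ
  have hsub : F ⊆ Finset.range n := Finset.filter_subset _ _
  have hcard : ∀ i0, SAc σ i0 = if i0 ∈ F then F.card - 1 else F.card := by
    intro i0
    unfold SAc
    rw [SA_erase, ← hF]
    by_cases h : i0 ∈ F
    · rw [if_pos h, Finset.card_erase_of_mem h]
    · rw [if_neg h, Finset.erase_eq_of_notMem h]
  have hsp : (∑ i0 ∈ Finset.range n, (Polynomial.X : Polynomial ℚ) ^ SAc σ i0)
      = F.card • (Polynomial.X : Polynomial ℚ) ^ (F.card - 1)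
        + (n - F.card) • (Polynomial.X : Polynomial ℚ) ^ F.card := by
    rw [← Finset.sum_filter_add_sum_filter_not (Finset.range n) (· ∈ F)]
    have h1 : (Finset.range n).filter (· ∈ F) = F := by
      rw [Finset.filter_mem_eq_inter]
      exact Finset.inter_eq_right.mpr hsub
    have h2 : (Finset.range n).filter (fun i0 => ¬ i0 ∈ F) = Finset.range n \ F :=
      (Finset.sdiff_eq_filter _ _).symm
    rw [h1, h2]
    congr 1
    · rw [Finset.sum_congr rfl fun i0 hi0 => by rw [hcard i0, if_pos hi0], Finset.sum_const]
    · rw [Finset.sum_congr rfl fun i0 hi0 => by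
        rw [hcard i0, if_neg (Finset.mem_sdiff.mp hi0).2], Finset.sum_const,
        Finset.card_sdiff_of_subset hsub, Finset.card_range]
  rw [hsp, ← ha]
  have hle : altdesB σ ≤ n := by
    rw [ha]
    have := Finset.card_le_card hsub
    simpa using this
  rw [Polynomial.derivative_X_pow]
  rcases Nat.eq_zero_or_pos (altdesB σ) with h0 | hpos
  · rw [h0]
    simp
  · have h1 : altdesB σ - 1 + 1 = altdesB σ := by omega
    rw [nsmul_eq_mul, nsmul_eq_mul, Polynomial.C_eq_natCast, Nat.cast_sub hle]
    have hXa : (Polynomial.X : Polynomial ℚ) ^ altdesB σ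
        = Polynomial.X ^ (altdesB σ - 1) * Polynomial.X := by
      rw [← pow_succ, h1]
    rw [hXa]
    ring

lemma SA_master (n : ℕ) :
    BpolyQ (n + 1) = (1 + Polynomial.X) * BpolyQ n
      + (1 + Polynomial.X ^ 2) * ((n : Polynomial ℚ) * BpolyQ n
        - (Polynomial.X - 1) * Polynomial.derivative (BpolyQ n)) := by
  rw [SA_step1 n]
  congr 2
  rw [Finset.sum_congr rfl fun σ _ => SA_sum_acard n σ, Finset.sum_sub_distrib]
  congr 1
  · rw [← Finset.mul_sum, BpolyQ]
  · rw [BpolyQ, map_sum, ← Finset.mul_sum]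
/-- Coefficient polynomials of the series `(x-1)cos(z(x-1)) - (x+1)sin(z(x-1))`,
without the `1/j!` factor. -/
noncomputable def SD : ℕ → Polynomial ℚ := fun j =>
  if Even j then Polynomial.C ((-1 : ℚ) ^ (j / 2)) * (Polynomial.X - 1) ^ (j + 1)
  else Polynomial.C (-(-1 : ℚ) ^ ((j - 1) / 2)) * ((Polynomial.X + 1) * (Polynomial.X - 1) ^ j)

lemma SD_succ (j : ℕ) :
    SD (j + 1) = (((j : Polynomial ℚ) + 1) * (Polynomial.X ^ 2 + 1) - (Polynomial.X + 1)) * SD j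
      - (Polynomial.X ^ 2 + 1) * (Polynomial.X - 1) * Polynomial.derivative (SD j) := by
  rcases Nat.even_or_odd j with ⟨m, rfl⟩ | ⟨m, rfl⟩
  · have he : Even (m + m) := ⟨m, rfl⟩
    have hno : ¬ Even (m + m + 1) := by simp [Nat.even_add_one, he]
    have e2 : (m + m) / 2 = m := by omega
    have e3 : (m + m + 1 - 1) / 2 = m := by omega
    simp only [SD]
    rw [if_pos he, if_neg hno, e2, e3]
    rw [Polynomial.derivative_C_mul, Polynomial.derivative_pow, Polynomial.derivative_sub,
      Polynomial.derivative_X, Polynomial.derivative_one]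
    simp only [map_neg, Nat.add_sub_cancel, Polynomial.C_eq_natCast]
    push_cast
    ring
  · have hno : ¬ Even (2 * m + 1) := by simp [Nat.even_add_one, Nat.even_iff]
    have he : Even (2 * m + 1 + 1) := ⟨m + 1, by omega⟩
    have e2 : (2 * m + 1 - 1) / 2 = m := by omega
    have e3 : (2 * m + 1 + 1) / 2 = m + 1 := by omega
    simp only [SD]
    rw [if_neg hno, if_pos he, e2, e3]
    rw [Polynomial.derivative_C_mul, Polynomial.derivative_mul, Polynomial.derivative_pow,
      Polynomial.derivative_add, Polynomial.derivative_sub, Polynomial.derivative_X,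
      Polynomial.derivative_one]
    have e4 : 2 * m + 1 - 1 = 2 * m := by omega
    rw [e4]
    simp only [map_neg, pow_succ, map_mul, map_one, Polynomial.C_eq_natCast]
    push_cast
    ring

/-- The convolution sums whose vanishing is the generating function identity. -/
noncomputable def TT (n : ℕ) : Polynomial ℚ :=
  ∑ j ∈ Finset.range (n + 1), Polynomial.C ((n.choose j : ℚ)) * (BpolyQ (n - j) * SD j)

lemma SA_BpolyQ_zero : BpolyQ 0 = 1 := by
  rw [BpolyQ]
  have h0 : ∀ σ : BSigned 0, altdesB σ = 0 := fun σ => by simp [altdesB]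
  rw [Finset.sum_congr rfl fun σ _ => by rw [h0 σ, pow_zero]]
  rw [Finset.sum_const]
  simp [Finset.card_univ, Fintype.card_prod, Fintype.card_perm, Fintype.card_fun]

lemma SA_BpolyQ_one : BpolyQ 1 = 1 + Polynomial.X := by
  rw [SA_master 0, SA_BpolyQ_zero]
  simp

lemma TT_one : TT 1 = 0 := by
  rw [TT, Finset.sum_range_succ, Finset.sum_range_succ, Finset.sum_range_zero]
  norm_num [SA_BpolyQ_zero, SA_BpolyQ_one, SD]
  ring

lemma TT_succ (n : ℕ) :
    TT (n + 1) = (Polynomial.X ^ 2 + 1) * (((n : Polynomial ℚ) + 1) * TT n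
      - (Polynomial.X - 1) * Polynomial.derivative (TT n)) := by
  have hder : Polynomial.derivative (TT n)
      = ∑ j ∈ Finset.range (n + 1), Polynomial.C ((n.choose j : ℚ))
          * (Polynomial.derivative (BpolyQ (n - j)) * SD j
            + BpolyQ (n - j) * Polynomial.derivative (SD j)) := by
    rw [TT, map_sum]
    refine Finset.sum_congr rfl fun j hj => ?_
    rw [Polynomial.derivative_C_mul, Polynomial.derivative_mul]
  have h3 : ∑ j ∈ Finset.range (n + 2),
        Polynomial.C ((n.choose j : ℚ)) * (BpolyQ (n + 1 - j) * SD j)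
      = ∑ j ∈ Finset.range (n + 1),
        Polynomial.C ((n.choose j : ℚ)) * (BpolyQ (n + 1 - j) * SD j) := by
    rw [Finset.sum_range_succ, Nat.choose_succ_self]
    simp
  have h2 : ∑ j ∈ Finset.range (n + 2),
        Polynomial.C ((n.choose j : ℚ)) * (BpolyQ (n + 1 - j) * SD j)
      = (∑ j ∈ Finset.range (n + 1),
          Polynomial.C ((n.choose (j + 1) : ℚ)) * (BpolyQ (n - j) * SD (j + 1)))
        + Polynomial.C ((n.choose 0 : ℚ)) * (BpolyQ (n + 1) * SD 0) := by
    rw [Finset.sum_range_succ']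
    congr 1
    refine Finset.sum_congr rfl fun j hj => ?_
    have e : n + 1 - (j + 1) = n - j := by omega
    rw [e]
  have hsplit : TT (n + 1)
      = (∑ j ∈ Finset.range (n + 1),
          Polynomial.C ((n.choose j : ℚ)) * (BpolyQ (n - j) * SD (j + 1)))
        + ∑ j ∈ Finset.range (n + 1),
          Polynomial.C ((n.choose j : ℚ)) * (BpolyQ (n + 1 - j) * SD j) := by
    rw [TT, Finset.sum_range_succ']
    have hA : (∑ j ∈ Finset.range (n + 1),
          Polynomial.C (((n + 1).choose (j + 1) : ℚ)) * (BpolyQ (n + 1 - (j + 1)) * SD (j + 1)))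
        = ∑ j ∈ Finset.range (n + 1),
            (Polynomial.C ((n.choose j : ℚ)) * (BpolyQ (n - j) * SD (j + 1))
              + Polynomial.C ((n.choose (j + 1) : ℚ)) * (BpolyQ (n - j) * SD (j + 1))) := by
      refine Finset.sum_congr rfl fun j hj => ?_
      have e : n + 1 - (j + 1) = n - j := by omega
      rw [e, Nat.choose_succ_succ, Nat.cast_add, map_add, add_mul]
    rw [hA, Finset.sum_add_distrib, add_assoc]
    congr 1
    rw [← h3, h2]
    norm_num
  rw [hsplit, hder, TT, Finset.mul_sum, Finset.mul_sum, ← Finset.sum_sub_distrib,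
    Finset.mul_sum, ← Finset.sum_add_distrib]
  refine Finset.sum_congr rfl fun j hj => ?_
  simp only [Finset.mem_range] at hj
  have hj' : j ≤ n := by omega
  have e : n + 1 - j = (n - j) + 1 := by omega
  rw [e, SA_master (n - j), SD_succ j, Nat.cast_sub hj']
  ring

lemma TT_pos (n : ℕ) : TT (n + 1) = 0 := by
  induction n with
  | zero => exact TT_one
  | succ m ih =>
    rw [TT_succ (m + 1), ih]
    simp
lemma SA_coeff_D (j : ℕ) :
    (PowerSeries.coeff (R := Polynomial ℚ) j)
      (PowerSeries.C (R := Polynomial ℚ) (Polynomial.X - 1) * cosSeries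
        - PowerSeries.C (R := Polynomial ℚ) (Polynomial.X + 1) * sinSeries)
      = Polynomial.C ((j.factorial : ℚ)⁻¹) * SD j := by
  rw [map_sub, PowerSeries.coeff_C_mul, PowerSeries.coeff_C_mul, cosSeries, sinSeries,
    PowerSeries.coeff_mk, PowerSeries.coeff_mk]
  by_cases hj : Even j
  · rw [if_pos hj, if_neg (not_not_intro hj)]
    simp only [SD, if_pos hj, map_mul]
    ring
  · rw [if_neg hj, if_pos hj]
    simp only [SD, if_neg hj, map_mul, map_neg]
    ring

lemma SA_fact_inv (n j : ℕ) (hj : j ≤ n) :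
    (((n - j).factorial : ℚ))⁻¹ * ((j.factorial : ℚ))⁻¹
      = ((n.factorial : ℚ))⁻¹ * (n.choose j : ℚ) := by
  have hh : ((n.choose j : ℚ)) * (j.factorial : ℚ) * ((n - j).factorial : ℚ)
      = (n.factorial : ℚ) := by
    exact_mod_cast congrArg (Nat.cast (R := ℚ)) (Nat.choose_mul_factorial_mul_factorial hj)
  have f1 : (j.factorial : ℚ) ≠ 0 := Nat.cast_ne_zero.mpr (Nat.factorial_ne_zero j)
  have f2 : ((n - j).factorial : ℚ) ≠ 0 := Nat.cast_ne_zero.mpr (Nat.factorial_ne_zero (n - j))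
  have f3 : (n.factorial : ℚ) ≠ 0 := Nat.cast_ne_zero.mpr (Nat.factorial_ne_zero n)
  field_simp
  linear_combination -hh

lemma SA_coeff_key (n : ℕ) :
    ∑ k ∈ Finset.range (n + 1),
        (Polynomial.C ((k.factorial : ℚ)⁻¹) * BpolyQ k)
          * (Polynomial.C (((n - k).factorial : ℚ)⁻¹) * SD (n - k))
      = Polynomial.C ((n.factorial : ℚ)⁻¹) * TT n := by
  rw [TT, Finset.mul_sum, ← Finset.sum_range_reflect]
  refine Finset.sum_congr rfl fun j hj => ?_
  simp only [Finset.mem_range] at hj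
  have e1 : n + 1 - 1 - j = n - j := by omega
  have e2 : n - (n - j) = j := by omega
  rw [e1, e2]
  have hs := SA_fact_inv n j (by omega)
  calc (Polynomial.C (((n - j).factorial : ℚ)⁻¹) * BpolyQ (n - j))
        * (Polynomial.C ((j.factorial : ℚ)⁻¹) * SD j)
      = Polynomial.C (((n - j).factorial : ℚ)⁻¹ * ((j.factorial : ℚ))⁻¹)
          * (BpolyQ (n - j) * SD j) := by
        rw [map_mul]; ring
    _ = Polynomial.C (((n.factorial : ℚ))⁻¹ * (n.choose j : ℚ)) * (BpolyQ (n - j) * SD j) := by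
        rw [hs]
    _ = Polynomial.C ((n.factorial : ℚ)⁻¹) * (Polynomial.C ((n.choose j : ℚ)) * (BpolyQ (n - j) * SD j)) := by
        rw [map_mul]; ring

lemma TT_zero : TT 0 = Polynomial.X - 1 := by
  rw [TT, Finset.sum_range_succ, Finset.sum_range_zero]
  norm_num [SA_BpolyQ_zero, SD]
end Stmt6Aux
/-- the exponential generating function identity
`(Σ_{n≥0} B̂_n(x) zⁿ/n!) · ((x-1)cos(z(x-1)) - (x+1)sin(z(x-1))) = x - 1`
in formal power series in `z` over `ℚ[x]`. -/
theorem stmt6 :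
    (PowerSeries.mk fun n => Polynomial.C ((n.factorial : ℚ)⁻¹) * BpolyQ n) *
      (PowerSeries.C (R := Polynomial ℚ) (Polynomial.X - 1) * cosSeries -
        PowerSeries.C (R := Polynomial ℚ) (Polynomial.X + 1) * sinSeries) =
      PowerSeries.C (R := Polynomial ℚ) (Polynomial.X - 1) := by
  ext n
  rw [PowerSeries.coeff_mul, Finset.Nat.sum_antidiagonal_eq_sum_range_succ_mk]
  have hsum : ∑ k ∈ Finset.range (n + 1),
      (PowerSeries.coeff (R := Polynomial ℚ) k)
          (PowerSeries.mk fun m => Polynomial.C ((m.factorial : ℚ)⁻¹) * BpolyQ m)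
        * (PowerSeries.coeff (R := Polynomial ℚ) (n - k))
          (PowerSeries.C (R := Polynomial ℚ) (Polynomial.X - 1) * cosSeries -
            PowerSeries.C (R := Polynomial ℚ) (Polynomial.X + 1) * sinSeries)
      = Polynomial.C ((n.factorial : ℚ)⁻¹) * TT n := by
    rw [← SA_coeff_key n]
    refine Finset.sum_congr rfl fun k _ => ?_
    rw [PowerSeries.coeff_mk, SA_coeff_D]
  rw [hsum, PowerSeries.coeff_C]
  rcases n with _ | m
  · rw [TT_zero]
    norm_num
  · rw [TT_pos m]
    norm_num
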